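/- Let p ≥ 1 be a natural number and let F_p = {y ∈ ℝ | ∃ m e : ℤ, |m| < 2^p ∧ y = m·2^e}. Let m, e be integers with m ≠ 0 and s = m·2^e, and suppose s is not a breakpoint of F_p. Let f ∈ F_p be nearest to s, and let r be a real number with |r| < 2^(e − p − 1). Then f is nearest to s + r, i.e., |s + r − f| ≤ |s + r − g| for all g ∈ F_p. -/
import Mathlib

/-- Gap between distinct integer multiples of a positive real, measured in absolute value. -/
private lemma gap_aux (δ : ℝ) (hδ : 0 < δ) (A B : ℤ)
    (h : |(A : ℝ) * δ| < |(B : ℝ) * δ|) : |(A : ℝ) * δ| + δ ≤ |(B : ℝ) * δ| := by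
  rw [abs_mul, abs_mul, abs_of_pos hδ] at h ⊢
  have hAB : |A| < |B| := by
    have h2 : |(A:ℝ)| < |(B:ℝ)| := lt_of_mul_lt_mul_right h (le_of_lt hδ)
    rw [← Int.cast_abs, ← Int.cast_abs] at h2
    exact_mod_cast h2
  have h3 : ((|A| : ℤ) : ℝ) + 1 ≤ ((|B| : ℤ) : ℝ) := by exact_mod_cast hAB
  rw [Int.cast_abs, Int.cast_abs] at h3
  nlinarith

set_option maxHeartbeats 1000000 in
theorem stmt_11 (p : ℕ) (hp : 1 ≤ p)
    (F : Set ℝ) (hF : F = {y : ℝ | ∃ m e : ℤ, |m| < 2 ^ p ∧ y = (m : ℝ) * (2 : ℝ) ^ e})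
    (m e : ℤ) (hm : m ≠ 0) (s : ℝ) (hs : s = (m : ℝ) * (2 : ℝ) ^ e)
    (hnb : ¬ ∃ f g : ℝ, f ∈ F ∧ g ∈ F ∧ f ≠ g ∧
      (∀ u ∈ F, |s - f| ≤ |s - u|) ∧ (∀ u ∈ F, |s - g| ≤ |s - u|))
    (f : ℝ) (hfF : f ∈ F) (hf : ∀ u ∈ F, |s - f| ≤ |s - u|)
    (r : ℝ) (hr : |r| < (2 : ℝ) ^ (e - (p : ℤ) - 1)) :
    ∀ g ∈ F, |s + r - f| ≤ |s + r - g| := by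
  have hpow : ∀ k : ℤ, (0:ℝ) < 2^k := fun k => zpow_pos two_pos k
  have hmono : ∀ {a b : ℤ}, a ≤ b → (2:ℝ)^a ≤ 2^b := fun h => zpow_le_zpow_right₀ one_le_two h
  set G : ℝ := (2:ℝ)^(e - (p:ℤ)) with hGdef
  have hGpos : 0 < G := hpow _
  have hG2 : G = 2 * 2^(e - (p:ℤ) - 1) := by
    rw [hGdef, show e - (p:ℤ) = (e - (p:ℤ) - 1) + 1 by ring, zpow_add_one₀ two_ne_zero]; ring
  -- |s| ≥ 2^e
  have habs_m : (1:ℝ) ≤ |(m:ℝ)| := by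
    have : (1:ℤ) ≤ |m| := Int.one_le_abs hm
    exact_mod_cast (by exact_mod_cast this : (1:ℝ) ≤ ((|m| : ℤ):ℝ)).trans_eq Int.cast_abs
  have hs_abs : (2:ℝ)^e ≤ |s| := by
    rw [hs, abs_mul, abs_of_pos (hpow e)]
    nlinarith [hpow e]
  -- any element of F with large absolute value is a multiple of G
  have hmulG : ∀ g ∈ F, (2:ℝ)^(e-1) ≤ |g| → ∃ N : ℤ, g = (N:ℝ) * G := by
    intro g hg hge
    rw [hF] at hg
    obtain ⟨n, k, hn, rfl⟩ := hg
    have hk : e - (p:ℤ) ≤ k := by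
      by_contra hk
      push_neg at hk
      have hk' : (p:ℤ) + k ≤ e - 1 := by omega
      have hnR : |(n:ℝ)| < 2^(p:ℤ) := by
        rw [← Int.cast_abs]
        calc ((|n|:ℤ):ℝ) < ((2^p : ℤ):ℝ) := by exact_mod_cast hn
        _ = 2^(p:ℤ) := by push_cast; rw [zpow_natCast]
      have : |(n:ℝ) * 2^k| < 2^(e-1) := by
        rw [abs_mul, abs_of_pos (hpow k)]
        calc |(n:ℝ)| * 2^k < 2^(p:ℤ) * 2^k := by nlinarith [hpow k, abs_nonneg (n:ℝ)]
        _ = 2^((p:ℤ)+k) := (zpow_add₀ two_ne_zero _ _).symm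
        _ ≤ 2^(e-1) := hmono hk'
      linarith
    refine ⟨n * 2^(k - (e - (p:ℤ))).toNat, ?_⟩
    have h1 : ((k - (e - (p:ℤ))).toNat : ℤ) = k - (e - (p:ℤ)) := Int.toNat_of_nonneg (by omega)
    push_cast
    rw [hGdef, mul_assoc, ← zpow_natCast (2:ℝ), ← zpow_add₀ (two_ne_zero), h1]
    ring_nf
  -- s is a multiple of G
  have hsG : ∃ N : ℤ, s = (N:ℝ) * G := by
    refine ⟨m * 2^p, ?_⟩
    push_cast
    rw [hGdef, mul_assoc, ← zpow_natCast (2:ℝ), ← zpow_add₀ (two_ne_zero)]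
    rw [hs]; ring_nf
  -- the key gap lemma
  -- no tie: distances from s to distinct elements of F are distinct
  have hnotie : ∀ g ∈ F, g ≠ f → |s - f| < |s - g| := by
    intro g hg hgf
    rcases lt_or_eq_of_le (hf g hg) with h | h
    · exact h
    · exfalso
      exact hnb ⟨f, g, hfF, hg, fun h' => hgf h'.symm, hf, fun u hu => h ▸ hf u hu⟩
  -- gap between s and a multiple-of-G element of F distinct from f,
  -- assuming f is also a multiple of G
  have hgapmul : ∀ g, (∃ N : ℤ, g = (N:ℝ) * G) → (∃ N : ℤ, f = (N:ℝ) * G) →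
      g ∈ F → g ≠ f → |s - f| + G ≤ |s - g| := by
    rintro g ⟨Ng, rfl⟩ ⟨Nf, hfN⟩ hg hgf
    obtain ⟨Ns, hsN⟩ := hsG
    have e1 : s - f = ((Ns - Nf : ℤ):ℝ) * G := by rw [hsN, hfN]; push_cast; ring
    have e2 : s - (Ng:ℝ)*G = ((Ns - Ng : ℤ):ℝ) * G := by rw [hsN]; push_cast; ring
    rw [e1, e2]
    exact gap_aux G hGpos _ _ (by rw [← e1, ← e2]; exact hnotie _ hg hgf)
  have key : ∀ g ∈ F, g ≠ f → |s - f| + G ≤ |s - g| := by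
    by_cases hmlt : |m| < 2^p
    -- Case A : s itself is in F, hence f = s
    · have hsF : s ∈ F := by rw [hF]; exact ⟨m, e, hmlt, hs⟩
      have hfs : f = s := by
        have h0 := hf s hsF
        simp only [sub_self, abs_zero] at h0
        have := abs_nonneg (s - f)
        have : |s - f| = 0 := le_antisymm h0 this
        have := abs_eq_zero.mp this
        linarith [sub_eq_zero.mp this]
      subst hfs
      intro g hg hgf
      by_cases hge : (2:ℝ)^(e-1) ≤ |g|
      · exact hgapmul g (hmulG g hg hge) hsG hg hgf
      · push_neg at hge
        have h1 : |f| - |g| ≤ |f - g| := abs_sub_abs_le_abs_sub f g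
        have h2 : (2:ℝ)^e = 2 * 2^(e-1) := by
          rw [show e = (e-1)+1 by ring, zpow_add_one₀ two_ne_zero]; ring
        have h3 : G ≤ (2:ℝ)^(e-1) := hmono (by omega)
        simp only [sub_self, abs_zero]
        linarith [hs_abs]
    -- Case B : |m| ≥ 2^p
    · push_neg at hmlt
      -- set up the binary magnitude t of m relative to p
      set L : ℕ := m.natAbs.log2 with hLdef
      have hm0 : m.natAbs ≠ 0 := fun h => hm (Int.natAbs_eq_zero.mp h)
      have hL1 : 2^L ≤ m.natAbs := Nat.log2_self_le hm0
      have hL2 : m.natAbs < 2^(L+1) := Nat.lt_log2_self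
      have hNat : 2^p ≤ m.natAbs := by
        have h := hmlt
        rw [Int.abs_eq_natAbs] at h
        exact_mod_cast h
      have hpL : p ≤ L := by
        have h1 := lt_of_le_of_lt hNat hL2
        have h2 := (Nat.pow_lt_pow_iff_right (by norm_num : 1 < 2)).mp h1
        omega
      set t : ℕ := L + 1 - p with htdef
      have ht1 : 1 ≤ t := by omega
      have hpt : p + t = L + 1 := by omega
      -- integer bounds on m
      have hmlo : (2:ℤ)^(p+t-1) ≤ |m| := by
        rw [Int.abs_eq_natAbs, show p+t-1 = L by omega]
        exact_mod_cast hL1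
      have hmhi : |m| < (2:ℤ)^(p+t) := by
        rw [Int.abs_eq_natAbs, hpt]
        exact_mod_cast hL2
      -- rounding m to a multiple of 2^t
      set H : ℤ := 2^(t-1) with hHdef
      set T : ℤ := 2^t with hTdef
      have hTH : T = 2 * H := by
        calc T = 2^((t-1)+1) := by rw [hTdef]; congr 1; omega
        _ = 2 * 2^(t-1) := pow_succ' 2 (t-1)
        _ = 2 * H := by rw [hHdef]
      have hHpos : 0 < H := by positivity
      set q : ℤ := (m + H) / T with hqdef
      have hdm : T * q + (m + H) % T = m + H := Int.mul_ediv_add_emod _ _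
      have hr1 : 0 ≤ (m + H) % T := Int.emod_nonneg _ (by positivity)
      have hr2 : (m + H) % T < T := Int.emod_lt_of_pos _ (by positivity)
      have hnear : |m - q * T| ≤ H := by
        have hcomm : T * q = q * T := mul_comm _ _
        have h : m - q * T = (m + H) % T - H := by linarith
        rw [h, abs_le]
        omega
      have hqbound : |q| ≤ 2^p := by
        have h1 : |q * T| ≤ |m| + |m - q * T| := by
          have h0 : q * T = m - (m - q * T) := by ring
          calc |q * T| = |m - (m - q * T)| := by rw [← h0]
          _ ≤ |m| + |m - q * T| := abs_sub m (m - q*T)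
        rw [abs_mul, abs_of_pos (by positivity : (0:ℤ) < T)] at h1
        have h2 : |q| * T < (2^p + 1) * T := by
          have : (2:ℤ)^(p+t) = 2^p * T := by rw [hTdef, pow_add]
          nlinarith
        exact by nlinarith [lt_of_mul_lt_mul_right h2 (le_of_lt (by positivity : (0:ℤ) < T))]
      -- the rounded value is in F
      have huF : ((q:ℝ) * 2^(e + (t:ℤ))) ∈ F := by
        rw [hF]
        rcases lt_or_eq_of_le hqbound with hlt | heq
        · exact ⟨q, e + t, hlt, rfl⟩
        · rcases (abs_eq (by positivity : (0:ℤ) ≤ 2^p)).mp heq with h | h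
          · refine ⟨2^(p-1), e + t + 1, ?_, ?_⟩
            · rw [abs_of_pos (by positivity)]
              exact pow_lt_pow_right₀ one_lt_two (by omega)
            · rw [h]
              push_cast
              have hpp : (2:ℝ)^(p-1) * 2 = 2^p := by
                rw [← pow_succ]; congr 1; omega
              rw [show e + (t:ℤ) + 1 = (e + (t:ℤ)) + 1 by ring, zpow_add_one₀ two_ne_zero, ← hpp]
              ring
          · refine ⟨-2^(p-1), e + t + 1, ?_, ?_⟩
            · rw [abs_neg, abs_of_pos (by positivity)]
              exact pow_lt_pow_right₀ one_lt_two (by omega)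
            · rw [h]
              push_cast
              have hpp : (2:ℝ)^(p-1) * 2 = 2^p := by
                rw [← pow_succ]; congr 1; omega
              rw [show e + (t:ℤ) + 1 = (e + (t:ℤ)) + 1 by ring, zpow_add_one₀ two_ne_zero, ← hpp]
              ring
      -- distance from s to the rounded value
      have hd : |s - f| ≤ (2:ℝ)^(e + (t:ℤ) - 1) := by
        have h1 : s - (q:ℝ) * 2^(e + (t:ℤ)) = ((m - q * T : ℤ):ℝ) * 2^e := by
          rw [hs, hTdef]
          push_cast
          rw [zpow_add₀ two_ne_zero, ← zpow_natCast (2:ℝ) t]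
          ring
        have h2 : |s - (q:ℝ) * 2^(e + (t:ℤ))| ≤ (2:ℝ)^(e + (t:ℤ) - 1) := by
          rw [h1, abs_mul, abs_of_pos (hpow e), ← Int.cast_abs]
          have h3 : ((|m - q*T| : ℤ):ℝ) ≤ ((H:ℤ):ℝ) := by exact_mod_cast hnear
          have h4 : ((H:ℤ):ℝ) = (2:ℝ)^((t:ℤ)-1) := by
            rw [hHdef]
            push_cast
            rw [← zpow_natCast (2:ℝ), show ((t-1 : ℕ):ℤ) = (t:ℤ)-1 by omega]
          have h5 : (2:ℝ)^((t:ℤ)-1) * 2^e = 2^(e + (t:ℤ) - 1) := by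
            rw [← zpow_add₀ two_ne_zero]; ring_nf
          calc ((|m - q*T| : ℤ):ℝ) * 2^e ≤ (2:ℝ)^((t:ℤ)-1) * 2^e := by
                rw [← h4]; nlinarith [hpow e]
          _ = 2^(e + (t:ℤ) - 1) := h5
        exact le_trans (hf _ huF) h2
      -- |s| is large
      have hS : (2:ℝ)^(e + (t:ℤ) + (p:ℤ) - 1) ≤ |s| := by
        rw [hs, abs_mul, abs_of_pos (hpow e), ← Int.cast_abs]
        have h1 : ((2:ℝ))^((p:ℤ)+(t:ℤ)-1) ≤ ((|m| : ℤ):ℝ) := by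
          have : (((2:ℤ)^(p+t-1) : ℤ):ℝ) ≤ ((|m| : ℤ):ℝ) := by exact_mod_cast hmlo
          calc (2:ℝ)^((p:ℤ)+(t:ℤ)-1) = (((2:ℤ)^(p+t-1) : ℤ):ℝ) := by
                push_cast
                rw [← zpow_natCast (2:ℝ), show ((p+t-1 : ℕ):ℤ) = (p:ℤ)+(t:ℤ)-1 by omega]
          _ ≤ _ := this
        calc (2:ℝ)^(e + (t:ℤ) + (p:ℤ) - 1) = 2^((p:ℤ)+(t:ℤ)-1) * 2^e := by
              rw [← zpow_add₀ two_ne_zero]; ring_nf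
        _ ≤ ((|m| : ℤ):ℝ) * 2^e := by nlinarith [hpow e]
      -- power comparisons
      have hP1 : (2:ℝ)^(e + (t:ℤ)) ≤ 2^(e + (t:ℤ) + (p:ℤ) - 1) := hmono (by omega)
      have hP2 : (2:ℝ)^(e + (t:ℤ)) = 2 * 2^(e + (t:ℤ) - 1) := by
        rw [show e + (t:ℤ) = (e + (t:ℤ) - 1) + 1 by ring, zpow_add_one₀ two_ne_zero]; ring
      have hP3 : (2:ℝ)^e ≤ 2^(e + (t:ℤ) - 1) := hmono (by omega)
      have hP4 : (2:ℝ)^e = 2 * 2^(e-1) := by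
        rw [show e = (e-1)+1 by ring, zpow_add_one₀ two_ne_zero]; ring
      have hP5 : G ≤ (2:ℝ)^(e-1) := hmono (by omega)
      -- f is large, hence a multiple of G
      have hfbig : (2:ℝ)^(e-1) ≤ |f| := by
        have h1 : |s| - |s - f| ≤ |f| := by
          have : |s| ≤ |f| + |s - f| := by
            calc |s| = |f + (s - f)| := by ring_nf
            _ ≤ |f| + |s - f| := abs_add_le _ _
          linarith
        linarith
      intro g hg hgf
      by_cases hge : (2:ℝ)^(e-1) ≤ |g|
      · exact hgapmul g (hmulG g hg hge) (hmulG f hfF hfbig) hg hgf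
      · push_neg at hge
        have h1 : |s| - |g| ≤ |s - g| := abs_sub_abs_le_abs_sub s g
        linarith

  -- conclusion
  intro g hg
  by_cases hgf : g = f
  · rw [hgf]
  · have h1 : |s + r - f| ≤ |s - f| + |r| := by
      have : s + r - f = (s - f) + r := by ring
      rw [this]; exact abs_add_le _ _
    have h2 : |s - g| ≤ |s + r - g| + |r| := by
      have heq : s - g = (s + r - g) + (-r) := by ring
      calc |s - g| = |(s + r - g) + (-r)| := by rw [← heq]
      _ ≤ |s + r - g| + |(-r)| := abs_add_le _ _
      _ = |s + r - g| + |r| := by rw [abs_neg]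
    have h3 := key g hg hgf
    rw [hG2] at h3
    linarith
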